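/- Let l < 0 < u and suppose d ∈ [l, 0] satisfies the tangency condition tanh(u) − tanh(d) = (1 − tanh(d)²)(u − d). Then for every y ∈ [l, u], tanh(y) ≥ tanh(u) + (1 − tanh(d)²)(y − u); that is, the line through the right endpoint (u, tanh(u)) with slope tanh'(d) is a lower bound for tanh on [l, u]. -/

import Mathlib

open Real Set

lemma my_hasDerivAt_tanh (x : ℝ) : HasDerivAt Real.tanh (1 - Real.tanh x ^ 2) x := by
  have hc := Real.cosh_pos x
  have h := ((Real.hasDerivAt_sinh x).div (Real.hasDerivAt_cosh x) hc.ne')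
  have he : ∀ y : ℝ, Real.tanh y = Real.sinh y / Real.cosh y := fun y =>
    Real.tanh_eq_sinh_div_cosh y
  have : (Real.cosh x * Real.cosh x - Real.sinh x * Real.sinh x) / Real.cosh x ^ 2
      = 1 - Real.tanh x ^ 2 := by
    rw [he x, div_pow]
    have h1 := Real.cosh_sq_sub_sinh_sq x
    field_simp
  rw [this] at h
  exact h.congr_of_eventuallyEq (Filter.Eventually.of_forall fun y => (he y))

lemma my_tanh_strictMono : StrictMono Real.tanh := by
  refine strictMono_of_hasDerivAt_pos (f' := fun x => 1 - Real.tanh x ^ 2)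
    (fun x => my_hasDerivAt_tanh x) (fun x => ?_)
  have hc := Real.cosh_pos x
  have h1 := Real.cosh_sq_sub_sinh_sq x
  have : Real.tanh x ^ 2 < 1 := by
    rw [Real.tanh_eq_sinh_div_cosh, div_pow, div_lt_one (by positivity)]
    nlinarith
  show (0:ℝ) < 1 - Real.tanh x ^ 2
  linarith

/-- CROWN linear lower bound for an unstable tanh neuron (`l < 0 < u`): the line through the
right endpoint `(u, tanh u)` with slope `tanh' d = 1 - tanh d ^ 2`, where `d ∈ [l, 0]` is the
tangency point, is a lower bound for `tanh` on `[l, u]`. -/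
theorem tanh_crown_lower_unstable (l u d : ℝ) (hl : l < 0) (hu : 0 < u)
    (hd : d ∈ Set.Icc l 0)
    (htangent : Real.tanh u - Real.tanh d = (1 - Real.tanh d ^ 2) * (u - d)) :
    ∀ y ∈ Set.Icc l u,
      Real.tanh u + (1 - Real.tanh d ^ 2) * (y - u) ≤ Real.tanh y := by
  intro y hy
  obtain ⟨hdl, hd0⟩ := hd
  obtain ⟨hyl, hyu⟩ := hy
  set k : ℝ := 1 - Real.tanh d ^ 2 with hk
  set g : ℝ → ℝ := fun x => Real.tanh x - Real.tanh d - k * (x - d) with hg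
  have hg' : ∀ x, HasDerivAt g (Real.tanh d ^ 2 - Real.tanh x ^ 2) x := by
    intro x
    have h1 := ((my_hasDerivAt_tanh x).sub_const (Real.tanh d)).sub
      (((hasDerivAt_id' x).sub_const d).const_mul k)
    have h2 : 1 - Real.tanh x ^ 2 - k * 1 = Real.tanh d ^ 2 - Real.tanh x ^ 2 := by
      rw [hk]; ring
    rw [h2] at h1
    exact h1
  have hgd : g d = 0 := by simp [hg]
  have hgu : g u = 0 := by
    show Real.tanh u - Real.tanh d - k * (u - d) = 0
    linarith [htangent]
  have hcont : Continuous g := by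
    have := fun x => (hg' x).differentiableAt
    exact (Differentiable.continuous this)
  -- sign of derivative via |tanh x| vs |tanh d|
  have key : 0 ≤ g y := by
    rcases le_total y d with h1 | h1
    · -- antitone on Iic d
      have hmono : AntitoneOn g (Set.Iic d) := by
        refine antitoneOn_of_hasDerivWithinAt_nonpos (convex_Iic d) hcont.continuousOn
          (fun x hx => ((hg' x).hasDerivWithinAt)) (fun x hx => ?_)
        rw [interior_Iic] at hx
        have hx' : x < d := hx
        have h2 : Real.tanh x < Real.tanh d := my_tanh_strictMono hx'
        have h3 : Real.tanh d ≤ Real.tanh 0 := my_tanh_strictMono.monotone hd0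
        rw [Real.tanh_zero] at h3
        nlinarith
      have := hmono (Set.mem_Iic.2 h1) (Set.mem_Iic.2 le_rfl) h1
      rw [hgd] at this; linarith
    · rcases le_total y (-d) with h2 | h2
      · -- monotone on Icc d (-d)
        have hmono : MonotoneOn g (Set.Icc d (-d)) := by
          refine monotoneOn_of_hasDerivWithinAt_nonneg (convex_Icc d (-d))
            hcont.continuousOn (fun x hx => ((hg' x).hasDerivWithinAt)) (fun x hx => ?_)
          have hx' := interior_subset (s := Set.Icc d (-d)) hx
          obtain ⟨ha, hb⟩ := hx'
          have h3 : Real.tanh d ≤ Real.tanh x := my_tanh_strictMono.monotone ha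
          have h4 : Real.tanh x ≤ Real.tanh (-d) := my_tanh_strictMono.monotone hb
          rw [Real.tanh_neg] at h4
          nlinarith
        have := hmono ⟨le_rfl, by linarith⟩ ⟨h1, h2⟩ h1
        rw [hgd] at this; linarith
      · -- antitone on Ici (-d)
        have hmono : AntitoneOn g (Set.Ici (-d)) := by
          refine antitoneOn_of_hasDerivWithinAt_nonpos (convex_Ici (-d))
            hcont.continuousOn (fun x hx => ((hg' x).hasDerivWithinAt)) (fun x hx => ?_)
          rw [interior_Ici] at hx
          have hx' : -d < x := hx
          have h3 : Real.tanh (-d) < Real.tanh x := my_tanh_strictMono hx'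
          rw [Real.tanh_neg] at h3
          have h4 : Real.tanh d ≤ Real.tanh 0 := my_tanh_strictMono.monotone hd0
          rw [Real.tanh_zero] at h4
          nlinarith
        have := hmono (Set.mem_Ici.2 h2) (Set.mem_Ici.2 (le_trans h2 hyu)) hyu
        rw [hgu] at this; linarith
  have : g y = Real.tanh y - Real.tanh d - k * (y - d) := rfl
  rw [this] at key
  rw [hk] at key ⊢
  nlinarith [key, htangent]
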